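/- arXiv:1010.4894 — 2 statements merged into one kernel-verified Lean document; each statement's English description precedes it below -/
import Mathlib

section
/- (Peller's theorem, discrete case.) There exists an absolute constant c ≥ 0 such that the following holds: Let H be a Hilbert space, let T ∈ L(H) satisfy ‖Tⁿ‖ ≤ M(1+n)^α for all n ≥ 0 (with constants M ≥ 1, α ≥ 0). Then for every polynomial f(z) = Σ_{k=0}^{N} a_k z^k one has ‖Σ_{k=0}^{N} a_k T^k‖ ≤ c · 9^α · M² · Σ_{n=0}^{∞} 2^{2αn} sup_{|z|<1} |Σ_{k} φ_n(k) a_k z^k|, where (φ_n)_{n≥0} is the dyadic partition of unity on ℤ₊ defined in the context. -/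
open MeasureTheory

/-- The dyadic partition of unity `(φ_n)_{n ≥ 0}` on `ℤ₊`:
`φ_0 = (1,1,0,…)`, and for `n ≥ 1`, `φ_n` is supported in
`[2^{n-1}, 2^{n+1}]`, equals `1` at `2^n`, vanishes at the endpoints and is
linear on `[2^{n-1}, 2^n]` and on `[2^n, 2^{n+1}]`. -/
noncomputable def dyadicPhi (n k : ℕ) : ℝ :=
  if n = 0 then (if k ≤ 1 then 1 else 0)
  else if k ≤ 2 ^ (n - 1) then 0
  else if k ≤ 2 ^ n then ((k : ℝ) - 2 ^ (n - 1)) / 2 ^ (n - 1)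
  else if k ≤ 2 ^ (n + 1) then ((2 : ℝ) ^ (n + 1) - (k : ℝ)) / 2 ^ n
  else 0

noncomputable def Complex.abs : AbsoluteValue ℂ ℝ := NormedField.toAbsoluteValue ℂ

lemma Complex.abs_apply (z : ℂ) : Complex.abs z = ‖z‖ := rfl

lemma Complex.abs_ofReal (r : ℝ) : Complex.abs (r : ℂ) = |r| := by
  rw [Complex.abs_apply, Complex.norm_real, Real.norm_eq_abs]

lemma Complex.abs_conj (z : ℂ) : Complex.abs ((starRingEnd ℂ) z) = Complex.abs z :=
  Complex.norm_conj z

lemma Complex.sq_abs (z : ℂ) : Complex.abs z ^ 2 = Complex.normSq z := Complex.sq_norm z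

lemma Complex.abs_exp_ofReal_mul_I (x : ℝ) :
    Complex.abs (Complex.exp (x * Complex.I)) = 1 := Complex.norm_exp_ofReal_mul_I x

lemma Complex.continuous_abs : Continuous Complex.abs := continuous_norm



lemma geom_root_sum (R : ℕ) (hR : 0 < R) (d : ℤ) (hd : d ≠ 0) (hdR : d.natAbs < R) :
    ∑ t ∈ Finset.range R, (Complex.exp (2 * Real.pi * Complex.I / R)) ^ (d * t) = 0 := by
  set ω : ℂ := Complex.exp (2 * Real.pi * Complex.I / R) with hω
  have hpow : ∀ m : ℤ, ω ^ m = Complex.exp (m * (2 * Real.pi * Complex.I / R)) := by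
    intro m
    rw [hω, ← Complex.exp_int_mul]
  have hR0 : (R : ℂ) ≠ 0 := Nat.cast_ne_zero.mpr hR.ne'
  have h2 : (2 * Real.pi * Complex.I : ℂ) ≠ 0 := by
    simp [Real.pi_ne_zero, Complex.I_ne_zero]
  have hne : ω ^ d ≠ 1 := by
    rw [hpow]
    intro h
    rw [Complex.exp_eq_one_iff] at h
    obtain ⟨n, hn⟩ := h
    have : (d : ℂ) = n * R := by
      field_simp at hn
      have h' : (d:ℂ) * (2 * Real.pi * Complex.I) = (n * R) * (2 * Real.pi * Complex.I) := by
        linear_combination (2 * Real.pi * Complex.I) * hn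
      exact mul_right_cancel₀ h2 h'
    have hdn : d = n * R := by exact_mod_cast this
    have hn0 : n ≠ 0 := by rintro rfl; simp at hdn; exact hd hdn
    have : R ≤ d.natAbs := by
      rw [hdn, Int.natAbs_mul, Int.natAbs_natCast]
      exact Nat.le_mul_of_pos_left R (Int.natAbs_pos.mpr hn0)
    omega
  have hgeom : ∑ t ∈ Finset.range R, (ω ^ d) ^ t = ((ω ^ d) ^ R - 1) / (ω ^ d - 1) :=
    geom_sum_eq hne R
  have hcyc : (ω ^ d) ^ R = 1 := by
    rw [← zpow_natCast (ω ^ d) R, ← zpow_mul, hpow]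
    rw [Complex.exp_eq_one_iff]
    exact ⟨d, by push_cast; field_simp⟩
  calc ∑ t ∈ Finset.range R, ω ^ (d * t)
      = ∑ t ∈ Finset.range R, (ω ^ d) ^ t := by
        refine Finset.sum_congr rfl fun t _ => ?_
        rw [← zpow_natCast (ω ^ d) t, ← zpow_mul]
    _ = 0 := by rw [hgeom, hcyc]; simp

open Finset intervalIntegral

lemma coeff_shift_bound (L σ : ℕ) (c : ℕ → ℂ) (S : ℝ)
    (hsupp : ∀ k, k < σ → c k = 0)
    (hS : ∀ z : ℂ, Complex.abs z < 1 → Complex.abs (∑ k ∈ Finset.range (L+1), c k * z ^ k) ≤ S) :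
    ∀ w : ℂ, Complex.abs w ≤ 1 →
      Complex.abs (∑ k ∈ Finset.range (L+1), c k * w ^ k) ≤ Complex.abs w ^ σ * S := by
  set p : ℂ → ℂ := fun z => ∑ k ∈ Finset.range (L+1), c k * z ^ k with hp
  set q : ℂ → ℂ := fun z => ∑ k ∈ Finset.range (L+1), c k * z ^ (k - σ) with hq
  have hqp : ∀ z : ℂ, z ^ σ * q z = p z := by
    intro z
    rw [hq, hp]
    simp only [Finset.mul_sum]
    refine Finset.sum_congr rfl fun k _ => ?_
    rcases lt_or_ge k σ with h | h
    · simp [hsupp k h]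
    · rw [← mul_assoc, mul_comm (z ^ σ), mul_assoc, ← pow_add]
      congr 2
      omega
  have hqdiff : Differentiable ℂ q := by
    refine Differentiable.fun_sum fun k _ => ?_
    exact (differentiable_pow _).const_mul _
  have hqcont : Continuous q := hqdiff.continuous
  have A0 : ∀ w : ℂ, Complex.abs w < 1 → Complex.abs (q w) ≤ S := by
    intro w hw
    have key : ∀ r : ℝ, Complex.abs w < r → r < 1 → Complex.abs (q w) * r ^ σ ≤ S := by
      intro r hr1 hr2
      have hr0 : 0 < r := lt_of_le_of_lt (Complex.abs.nonneg w) hr1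
      have hmem : w ∈ closure (Metric.ball (0:ℂ) r) := by
        rw [closure_ball (0:ℂ) hr0.ne']
        exact Metric.mem_closedBall.mpr (by simpa [Complex.dist_eq, Complex.abs_apply] using hr1.le)
      have hfr : Complex.abs (q w) ≤ S / r ^ σ := by
        refine Complex.norm_le_of_forall_mem_frontier_norm_le
          (U := Metric.ball (0:ℂ) r) Metric.isBounded_ball
          (hqdiff.diffContOnCl) (fun ζ hζ => ?_) hmem
        rw [frontier_ball (0:ℂ) hr0.ne'] at hζ
        have hζr : Complex.abs ζ = r := by
          simpa [Complex.dist_eq, Complex.abs_apply] using hζ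
        have hpz : Complex.abs (p ζ) ≤ S := hS ζ (by rw [hζr]; exact hr2)
        have hqe : Complex.abs ζ ^ σ * Complex.abs (q ζ) = Complex.abs (p ζ) := by
          rw [← hqp ζ, map_mul, map_pow]
        rw [hζr] at hqe
        rw [show ‖q ζ‖ = Complex.abs (q ζ) from rfl, le_div_iff₀ (by positivity)]
        calc Complex.abs (q ζ) * r ^ σ = r ^ σ * Complex.abs (q ζ) := by ring
          _ = Complex.abs (p ζ) := hqe
          _ ≤ S := hpz
      calc Complex.abs (q w) * r ^ σ ≤ (S / r ^ σ) * r ^ σ :=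
            mul_le_mul_of_nonneg_right hfr (by positivity)
        _ = S := div_mul_cancel₀ S (by positivity)
    have htend : Filter.Tendsto (fun r : ℝ => Complex.abs (q w) * r ^ σ)
        (nhdsWithin 1 (Set.Iio 1)) (nhds (Complex.abs (q w))) := by
      have : Filter.Tendsto (fun r : ℝ => Complex.abs (q w) * r ^ σ)
          (nhds 1) (nhds (Complex.abs (q w) * 1 ^ σ)) := by
        exact (continuous_const.mul (continuous_pow σ)).tendsto 1
      simpa using this.mono_left nhdsWithin_le_nhds
    refine le_of_tendsto htend ?_
    filter_upwards [Ioo_mem_nhdsLT_of_mem (Set.mem_Ioc.mpr ⟨hw, le_refl 1⟩)] with r hr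
    exact key r hr.1 hr.2
  have A1 : ∀ w : ℂ, Complex.abs w ≤ 1 → Complex.abs (q w) ≤ S := by
    intro w hw
    have htend : Filter.Tendsto (fun r : ℝ => Complex.abs (q ((r:ℂ) * w)))
        (nhdsWithin 1 (Set.Iio 1)) (nhds (Complex.abs (q w))) := by
      have hc : Continuous (fun r : ℝ => Complex.abs (q ((r:ℂ) * w))) := by
        exact Complex.continuous_abs.comp (hqcont.comp ((Complex.continuous_ofReal).mul continuous_const))
      have := hc.tendsto 1
      simp only [Complex.ofReal_one, one_mul] at this
      exact this.mono_left nhdsWithin_le_nhds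
    refine le_of_tendsto htend ?_
    filter_upwards [Ioo_mem_nhdsLT_of_mem (Set.mem_Ioc.mpr ⟨(by norm_num : (0:ℝ) < 1), le_refl 1⟩)] with r hr
    refine A0 _ ?_
    rw [map_mul, Complex.abs_ofReal, abs_of_pos hr.1]
    calc r * Complex.abs w ≤ r * 1 := by
          exact mul_le_mul_of_nonneg_left hw hr.1.le
      _ < 1 := by simpa using hr.2
  intro w hw
  rw [show (∑ k ∈ Finset.range (L+1), c k * w ^ k) = p w from rfl, ← hqp w, map_mul, map_pow]
  exact mul_le_mul_of_nonneg_left (A1 w hw) (by positivity)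

lemma g_bound (L σ : ℕ) (c : ℕ → ℂ) (S : ℝ) (hS0 : 0 ≤ S)
    (hsupp : ∀ k, k < σ → c k = 0)
    (hS : ∀ z : ℂ, Complex.abs z < 1 → Complex.abs (∑ k ∈ Finset.range (L+1), c k * z ^ k) ≤ S) :
    ∀ w : ℂ, Complex.abs w ≤ 1 →
      Complex.abs (∑ k ∈ Finset.range (L+1), c k / ((k:ℂ)+1) * w ^ k) ≤ S / (σ + 1) := by
  intro w hw
  have hrep : (∑ k ∈ Finset.range (L+1), c k / ((k:ℂ)+1) * w ^ k)
      = ∫ t in (0:ℝ)..1, ∑ k ∈ Finset.range (L+1), c k * ((t:ℂ) * w) ^ k := by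
    rw [intervalIntegral.integral_finset_sum]
    · refine Finset.sum_congr rfl fun k _ => ?_
      have h1 : ∀ t : ℝ, c k * ((t:ℂ) * w) ^ k = ((t:ℝ)^k : ℝ) • (c k * w ^ k) := by
        intro t
        rw [mul_pow]
        push_cast
        rw [Complex.real_smul]
        push_cast
        ring
      simp_rw [h1]
      rw [intervalIntegral.integral_smul_const, integral_pow]
      rw [Complex.real_smul]
      push_cast
      ring
    · intro k _
      apply Continuous.intervalIntegrable
      continuity
  rw [hrep]
  have hbound : ∀ t ∈ Set.Icc (0:ℝ) 1,
      Complex.abs (∑ k ∈ Finset.range (L+1), c k * ((t:ℂ) * w) ^ k) ≤ t ^ σ * S := by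
    intro t ht
    have habs : Complex.abs ((t:ℂ) * w) ≤ 1 := by
      rw [map_mul, Complex.abs_ofReal, abs_of_nonneg ht.1]
      calc t * Complex.abs w ≤ 1 * 1 := by
            exact mul_le_mul ht.2 hw (Complex.abs.nonneg w) zero_le_one
        _ = 1 := by norm_num
    calc Complex.abs (∑ k ∈ Finset.range (L+1), c k * ((t:ℂ) * w) ^ k)
        ≤ Complex.abs ((t:ℂ) * w) ^ σ * S := coeff_shift_bound L σ c S hsupp hS _ habs
      _ ≤ t ^ σ * S := by
          refine mul_le_mul_of_nonneg_right ?_ hS0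
          refine pow_le_pow_left₀ (Complex.abs.nonneg _) ?_ σ
          rw [map_mul, Complex.abs_ofReal, abs_of_nonneg ht.1]
          calc t * Complex.abs w ≤ t * 1 := mul_le_mul_of_nonneg_left hw ht.1
            _ = t := by ring
  calc Complex.abs (∫ t in (0:ℝ)..1, ∑ k ∈ Finset.range (L+1), c k * ((t:ℂ) * w) ^ k)
      = ‖∫ t in (0:ℝ)..1, ∑ k ∈ Finset.range (L+1), c k * ((t:ℂ) * w) ^ k‖ := rfl
    _ ≤ |∫ t in (0:ℝ)..1, t ^ σ * S| := by
        refine (intervalIntegral.norm_integral_le_of_norm_le (by norm_num) ?_ ?_).trans (le_abs_self _)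
        · exact Filter.Eventually.of_forall fun t ht => hbound t ⟨ht.1.le, ht.2⟩
        · apply Continuous.intervalIntegrable
          continuity
    _ = S / (σ + 1) := by
        rw [intervalIntegral.integral_mul_const, integral_pow, one_pow,
          zero_pow (by omega : σ + 1 ≠ 0)]
        rw [abs_of_nonneg (mul_nonneg (div_nonneg (by norm_num) (by positivity)) hS0)]
        push_cast
        ring

lemma double_sum_count {β : Type*} [AddCommMonoid β] (L : ℕ) (f : ℕ → β)
    (hf : ∀ k, L < k → f k = 0) :
    ∑ i ∈ Finset.range (L+1), ∑ j ∈ Finset.range (L+1), f (i+j)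
      = ∑ k ∈ Finset.range (L+1), (k+1) • f k := by
  have step1 : ∀ i ∈ Finset.range (L+1),
      ∑ j ∈ Finset.range (L+1), f (i+j)
        = ∑ k ∈ Finset.range (L+1), (if i ≤ k then f k else 0) := by
    intro i hi
    rw [Finset.mem_range] at hi
    have h1 : ∑ j ∈ Finset.range (L+1), f (i+j) = ∑ k ∈ Finset.Ico i (i+(L+1)), f k := by
      rw [Finset.sum_Ico_eq_sum_range]
      simp
    have h2 : ∑ k ∈ Finset.Ico i (i+(L+1)), f k = ∑ k ∈ Finset.Ico i (L+1), f k := by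
      symm
      apply Finset.sum_subset
      · exact Finset.Ico_subset_Ico le_rfl (by omega)
      · intro k hk hk'
        rw [Finset.mem_Ico] at hk hk'
        exact hf k (by omega)
    have h3 : Finset.Ico i (L+1) = (Finset.range (L+1)).filter (fun k => i ≤ k) := by
      ext k
      simp [Finset.mem_Ico, Finset.mem_range, Finset.mem_filter]
      omega
    rw [h1, h2, h3, Finset.sum_filter]
  rw [Finset.sum_congr rfl step1, Finset.sum_comm]
  refine Finset.sum_congr rfl fun k hk => ?_
  rw [Finset.mem_range] at hk
  have h4 : ∑ i ∈ Finset.range (L+1), (if i ≤ k then f k else 0)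
      = ∑ i ∈ (Finset.range (L+1)).filter (fun i => i ≤ k), f k := by
    rw [Finset.sum_filter]
  have h5 : (Finset.range (L+1)).filter (fun i => i ≤ k) = Finset.range (k+1) := by
    ext i
    simp [Finset.mem_range, Finset.mem_filter]
    omega
  rw [h4, h5, Finset.sum_const, Finset.card_range]

open ComplexConjugate

local notation "⟪" x ", " y "⟫" => @inner ℂ _ _ x y

lemma parseval_helper {H : Type*} [NormedAddCommGroup H] [InnerProductSpace ℂ H]
    (R L : ℕ) (ζ : ℂ) (hζ : Complex.abs ζ = 1)
    (horth : ∀ d : ℤ, d ≠ 0 → d.natAbs ≤ 2*L → ∑ t ∈ Finset.range R, ζ ^ (d * t) = 0)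
    (u : ℕ → H) :
    ∑ t ∈ Finset.range R, ‖∑ j ∈ Finset.range (L+1), ((ζ ^ t) ^ j) • u j‖^2
      = (R : ℝ) * ∑ j ∈ Finset.range (L+1), ‖u j‖^2 := by
  have hζ0 : ζ ≠ 0 := by
    intro h
    rw [h] at hζ
    simp at hζ
  have hconj : conj ζ = ζ⁻¹ := by
    have h1 : ζ * conj ζ = 1 := by
      rw [Complex.mul_conj]
      rw [← Complex.sq_abs, hζ]
      norm_num
    field_simp
    linear_combination h1
  -- complex-level identity
  have main : ∑ t ∈ Finset.range R, (⟪∑ j ∈ Finset.range (L+1), ((ζ ^ t) ^ j) • u j,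
      ∑ j ∈ Finset.range (L+1), ((ζ ^ t) ^ j) • u j⟫ : ℂ)
      = (R : ℂ) * ∑ j ∈ Finset.range (L+1), ⟪u j, u j⟫ := by
    have expand : ∀ t : ℕ, (⟪∑ j ∈ Finset.range (L+1), ((ζ ^ t) ^ j) • u j,
        ∑ j ∈ Finset.range (L+1), ((ζ ^ t) ^ j) • u j⟫ : ℂ)
        = ∑ i ∈ Finset.range (L+1), ∑ j ∈ Finset.range (L+1),
            ζ ^ (((j:ℤ) - i) * t) * ⟪u i, u j⟫ := by
      intro t
      rw [sum_inner]
      refine Finset.sum_congr rfl fun i _ => ?_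
      rw [inner_sum]
      refine Finset.sum_congr rfl fun j _ => ?_
      rw [inner_smul_left, inner_smul_right, ← mul_assoc]
      congr 1
      simp only [map_pow, hconj]
      rw [← zpow_natCast (ζ⁻¹ ^ t) i, ← zpow_natCast (ζ ^ t) j]
      rw [← zpow_natCast ζ⁻¹ t, ← zpow_natCast ζ t, ← zpow_mul, ← zpow_mul]
      rw [inv_zpow, ← zpow_neg, ← zpow_add₀ hζ0]
      congr 1
      ring
    simp_rw [expand]
    rw [Finset.sum_comm]
    have inner_eval : ∀ i ∈ Finset.range (L+1), ∑ t ∈ Finset.range R,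
        ∑ j ∈ Finset.range (L+1), ζ ^ (((j:ℤ) - i) * t) * ⟪u i, u j⟫
        = (R : ℂ) * ⟪u i, u i⟫ := by
      intro i hi
      rw [Finset.mem_range] at hi
      rw [Finset.sum_comm]
      have hterm : ∀ j ∈ Finset.range (L+1),
          ∑ t ∈ Finset.range R, ζ ^ (((j:ℤ) - i) * t) * ⟪u i, u j⟫
          = (if j = i then (R:ℂ) * ⟪u i, u i⟫ else 0) := by
        intro j hj
        rw [Finset.mem_range] at hj
        rw [← Finset.sum_mul]
        by_cases h : j = i
        · subst h
          simp
        · rw [horth ((j:ℤ) - i) (by omega) (by omega)]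
          simp [h]
      rw [Finset.sum_congr rfl hterm, Finset.sum_ite_eq' (Finset.range (L+1)) i]
      simp [Finset.mem_range.mpr hi]
    rw [Finset.sum_congr rfl inner_eval, ← Finset.mul_sum]
  -- pass to real parts
  have cast1 : ∀ (x : H), (⟪x, x⟫ : ℂ) = ((‖x‖^2 : ℝ) : ℂ) := by
    intro x
    rw [inner_self_eq_norm_sq_to_K]
    norm_cast
  simp_rw [cast1] at main
  rw [← Complex.ofReal_sum, ← Complex.ofReal_sum] at main
  have := main
  rw [show ((R:ℂ)) = ((R:ℝ):ℂ) by push_cast; ring] at this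
  rw [← Complex.ofReal_mul] at this
  exact_mod_cast this

section KB
variable {H : Type*} [NormedAddCommGroup H] [InnerProductSpace ℂ H] [CompleteSpace H]

lemma key_bound (T : H →L[ℂ] H) (M α : ℝ) (hM : 1 ≤ M) (hα : 0 ≤ α)
    (hT : ∀ n : ℕ, ‖T ^ n‖ ≤ M * (1 + (n : ℝ)) ^ α)
    (σ L : ℕ) (c : ℕ → ℂ)
    (hsupp : ∀ k, k < σ → c k = 0) (hsupp2 : ∀ k, L < k → c k = 0) (S : ℝ)
    (hS : ∀ z : ℂ, Complex.abs z < 1 → Complex.abs (∑ k ∈ Finset.range (L+1), c k * z ^ k) ≤ S) :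
    ‖∑ k ∈ Finset.range (L+1), c k • T ^ k‖ ≤
      (((L:ℝ)+1) * (S / ((σ:ℝ)+1))) * (M * (1 + (L:ℝ)) ^ α) ^ 2 := by
  have hS0 : 0 ≤ S := le_trans (Complex.abs.nonneg _) (hS 0 (by simp))
  set P : H →L[ℂ] H := ∑ k ∈ Finset.range (L+1), c k • T ^ k with hP
  set A : ℝ := M * (1 + (L:ℝ)) ^ α with hA
  have hA0 : 0 ≤ A := by
    apply mul_nonneg (by linarith)
    exact Real.rpow_nonneg (by positivity) α
  have hTj : ∀ j : ℕ, j ≤ L → ‖T ^ j‖ ≤ A := by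
    intro j hj
    refine (hT j).trans ?_
    rw [hA]
    refine mul_le_mul_of_nonneg_left ?_ (by linarith)
    refine Real.rpow_le_rpow (by positivity) ?_ hα
    have : (j:ℝ) ≤ (L:ℝ) := by exact_mod_cast hj
    linarith
  set R : ℕ := 2*L+1 with hRdef
  have hR0 : 0 < R := by omega
  set ω : ℂ := Complex.exp (2 * Real.pi * Complex.I / R) with hωdef
  have hωabs : Complex.abs ω = 1 := by
    rw [hωdef, show (2 * Real.pi * Complex.I / (R:ℂ)) = ((2 * Real.pi / R : ℝ) : ℂ) * Complex.I
      by push_cast; ring]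
    exact Complex.abs_exp_ofReal_mul_I _
  have hω0 : ω ≠ 0 := Complex.exp_ne_zero _
  have horthω : ∀ d : ℤ, d ≠ 0 → d.natAbs ≤ 2*L → ∑ t ∈ Finset.range R, ω ^ (d * t) = 0 :=
    fun d hd h => geom_root_sum R hR0 d hd (by omega)
  set β : ℂ := conj ω with hβdef
  have hβabs : Complex.abs β = 1 := by rw [hβdef, Complex.abs_conj]; exact hωabs
  have hβ0 : β ≠ 0 := by rw [hβdef]; simpa using hω0
  have hωinv : conj ω = ω⁻¹ := by
    have h1 : ω * conj ω = 1 := by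
      rw [Complex.mul_conj, ← Complex.sq_abs, hωabs]
      norm_num
    field_simp
    linear_combination h1
  have hβinv : β = ω⁻¹ := by rw [hβdef, hωinv]
  have hconjβ : conj β = ω := by rw [hβdef, Complex.conj_conj]
  have horthβ : ∀ d : ℤ, d ≠ 0 → d.natAbs ≤ 2*L → ∑ t ∈ Finset.range R, β ^ (d * t) = 0 := by
    intro d hd h
    have : ∑ t ∈ Finset.range R, β ^ (d * t)
        = conj (∑ t ∈ Finset.range R, ω ^ (d * t)) := by
      rw [map_sum]
      exact Finset.sum_congr rfl fun t _ => by rw [hβdef, ← map_zpow₀]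
    rw [this, horthω d hd h, map_zero]
  set γ : ℕ → ℂ := fun k => c k / ((k:ℂ)+1) with hγdef
  have hγ2 : ∀ k, L < k → γ k = 0 := fun k hk => by
    rw [hγdef]; simp [hsupp2 k hk]
  -- the bilinear estimate
  have bilin : ∀ x y : H, ‖(⟪y, P x⟫ : ℂ)‖ ≤
      ((((L:ℝ)+1) * (S / ((σ:ℝ)+1))) * A^2) * (‖x‖ * ‖y‖) := by
    intro x y
    set u : ℕ → H := fun j => (T^j) x with hu
    set v : ℕ → H := fun i => (ContinuousLinearMap.adjoint (T^i)) y with hv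
    set U : ℕ → H := fun t => ∑ j ∈ Finset.range (L+1), ((ω^t)^j) • u j with hU
    set V : ℕ → H := fun t => ∑ i ∈ Finset.range (L+1), ((β^t)^i) • v i with hV
    set G : ℕ → ℂ := fun t => ∑ k ∈ Finset.range (L+1), γ k * (β^t)^k with hG
    have claim1 : ∑ i ∈ Finset.range (L+1), ∑ j ∈ Finset.range (L+1),
        γ (i+j) * ⟪v i, u j⟫ = ⟪y, P x⟫ := by
      have hvu : ∀ i j : ℕ, (⟪v i, u j⟫ : ℂ) = ⟪y, (T^(i+j)) x⟫ := by
        intro i j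
        rw [hv, hu]
        simp only
        rw [ContinuousLinearMap.adjoint_inner_left]
        congr 1
        rw [pow_add]
        rfl
      have e1 : ∑ i ∈ Finset.range (L+1), ∑ j ∈ Finset.range (L+1),
          γ (i+j) * ⟪v i, u j⟫
          = ∑ i ∈ Finset.range (L+1), ∑ j ∈ Finset.range (L+1),
            γ (i+j) * ⟪y, (T^(i+j)) x⟫ := by
        refine Finset.sum_congr rfl fun i _ => Finset.sum_congr rfl fun j _ => ?_
        rw [hvu i j]
      have e3 := double_sum_count L (fun k => γ k * ⟪y, (T^k) x⟫)
        (fun k hk => by rw [hγ2 k hk]; simp)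
      beta_reduce at e3
      rw [e1, e3]
      have e2 : ∀ k ∈ Finset.range (L+1),
          (k+1) • (γ k * ⟪y, (T^k) x⟫) = c k * ⟪y, (T^k) x⟫ := by
        intro k _
        rw [nsmul_eq_mul]
        simp only [hγdef]
        have hk0 : ((k:ℂ)+1) ≠ 0 := by
          intro h
          have := Nat.cast_add_one_ne_zero (R := ℂ) k
          exact this (by push_cast at h ⊢; linear_combination h)
        field_simp
        push_cast
        ring
      rw [Finset.sum_congr rfl e2]
      rw [hP, ContinuousLinearMap.sum_apply, inner_sum]
      refine Finset.sum_congr rfl fun k _ => ?_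
      rw [ContinuousLinearMap.smul_apply, inner_smul_right]
    have expand : ∀ t : ℕ, G t * ⟪V t, U t⟫
        = ∑ i ∈ Finset.range (L+1), ∑ j ∈ Finset.range (L+1), ∑ k ∈ Finset.range (L+1),
            (γ k * ⟪v i, u j⟫) * ω ^ ((((i:ℤ)+j) - k) * t) := by
      intro t
      have hVU : (⟪V t, U t⟫ : ℂ) = ∑ i ∈ Finset.range (L+1), ∑ j ∈ Finset.range (L+1),
          (ω^t)^i * ((ω^t)^j * ⟪v i, u j⟫) := by
        rw [hV, hU]
        simp only []
        rw [sum_inner]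
        refine Finset.sum_congr rfl fun i _ => ?_
        rw [inner_sum]
        refine Finset.sum_congr rfl fun j _ => ?_
        rw [inner_smul_left, inner_smul_right, ← mul_assoc]
        simp only [map_pow, hconjβ]
        ring
      rw [hVU, Finset.mul_sum]
      refine Finset.sum_congr rfl fun i hi => ?_
      rw [Finset.mul_sum]
      refine Finset.sum_congr rfl fun j hj => ?_
      rw [hG]
      simp only []
      rw [Finset.sum_mul]
      refine Finset.sum_congr rfl fun k hk => ?_
      have hz1 : ((β^t)^k : ℂ) = ω ^ (-(((k:ℤ))*t)) := by
        rw [hβinv, ← zpow_natCast (ω⁻¹^t) k, ← zpow_natCast ω⁻¹ t, ← zpow_mul, inv_zpow,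
          ← zpow_neg]
        congr 1
        push_cast
        ring
      have hz2 : ∀ m : ℕ, ((ω^t)^m : ℂ) = ω ^ (((m:ℤ))*t) := by
        intro m
        rw [← zpow_natCast (ω^t) m, ← zpow_natCast ω t, ← zpow_mul]
        congr 1
        push_cast
        ring
      rw [hz1, hz2 i, hz2 j]
      have hsplit : ω ^ ((((i:ℤ)+j) - k) * t)
          = ω ^ ((i:ℤ)*t) * (ω ^ ((j:ℤ)*t) * ω ^ (-((k:ℤ)*t))) := by
        rw [← zpow_add₀ hω0, ← zpow_add₀ hω0]
        congr 1
        ring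
      rw [hsplit]
      ring
    have claim2 : ∑ t ∈ Finset.range R, G t * ⟪V t, U t⟫
        = (R:ℂ) * ∑ i ∈ Finset.range (L+1), ∑ j ∈ Finset.range (L+1),
            γ (i+j) * ⟪v i, u j⟫ := by
      rw [Finset.sum_congr rfl (fun t _ => expand t)]
      rw [Finset.sum_comm]
      rw [Finset.mul_sum]
      refine Finset.sum_congr rfl fun i hi => ?_
      rw [Finset.sum_comm, Finset.mul_sum]
      refine Finset.sum_congr rfl fun j hj => ?_
      rw [Finset.sum_comm]
      rw [Finset.mem_range] at hi hj
      have hterm : ∀ k ∈ Finset.range (L+1),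
          ∑ t ∈ Finset.range R, (γ k * ⟪v i, u j⟫) * ω ^ ((((i:ℤ)+j) - k) * t)
          = (if k = i+j then (γ k * ⟪v i, u j⟫) * R else 0) := by
        intro k hk
        rw [Finset.mem_range] at hk
        rw [← Finset.mul_sum]
        by_cases h : k = i + j
        · subst h
          simp
        · rw [horthω ((((i:ℤ)+j) - k)) (by omega) (by omega)]
          simp [h]
      rw [Finset.sum_congr rfl hterm, Finset.sum_ite_eq' (Finset.range (L+1)) (i+j)]
      by_cases hij : i + j ∈ Finset.range (L+1)
      · rw [if_pos hij]; ring
      · rw [if_neg hij]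
        rw [Finset.mem_range] at hij
        rw [hγ2 (i+j) (by omega)]
        ring
    have pU : ∑ t ∈ Finset.range R, ‖U t‖^2
        = (R:ℝ) * ∑ j ∈ Finset.range (L+1), ‖u j‖^2 := by
      rw [hU]
      exact parseval_helper R L ω hωabs horthω u
    have pV : ∑ t ∈ Finset.range R, ‖V t‖^2
        = (R:ℝ) * ∑ i ∈ Finset.range (L+1), ‖v i‖^2 := by
      rw [hV]
      exact parseval_helper R L β hβabs horthβ v
    have hub : ∀ j ∈ Finset.range (L+1), ‖u j‖^2 ≤ (A*‖x‖)^2 := by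
      intro j hj
      rw [Finset.mem_range] at hj
      have h1 : ‖u j‖ ≤ A * ‖x‖ := by
        rw [hu]
        simp only []
        calc ‖(T^j) x‖ ≤ ‖T^j‖ * ‖x‖ := ContinuousLinearMap.le_opNorm _ _
          _ ≤ A * ‖x‖ := mul_le_mul_of_nonneg_right (hTj j (by omega)) (norm_nonneg x)
      exact pow_le_pow_left₀ (norm_nonneg _) h1 2
    have hvb : ∀ i ∈ Finset.range (L+1), ‖v i‖^2 ≤ (A*‖y‖)^2 := by
      intro i hi
      rw [Finset.mem_range] at hi
      have hadj : ‖ContinuousLinearMap.adjoint (T^i)‖ = ‖T^i‖ :=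
        LinearIsometryEquiv.norm_map ContinuousLinearMap.adjoint (T^i)
      have h1 : ‖v i‖ ≤ A * ‖y‖ := by
        rw [hv]
        simp only []
        calc ‖(ContinuousLinearMap.adjoint (T^i)) y‖
            ≤ ‖ContinuousLinearMap.adjoint (T^i)‖ * ‖y‖ := ContinuousLinearMap.le_opNorm _ _
          _ = ‖T^i‖ * ‖y‖ := by rw [hadj]
          _ ≤ A * ‖y‖ := mul_le_mul_of_nonneg_right (hTj i (by omega)) (norm_nonneg y)
      exact pow_le_pow_left₀ (norm_nonneg _) h1 2
    have sumU : ∑ t ∈ Finset.range R, ‖U t‖^2 ≤ (R:ℝ) * (((L:ℝ)+1) * (A*‖x‖)^2) := by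
      rw [pU]
      refine mul_le_mul_of_nonneg_left ?_ (by positivity)
      calc ∑ j ∈ Finset.range (L+1), ‖u j‖^2 ≤ ∑ _j ∈ Finset.range (L+1), (A*‖x‖)^2 :=
            Finset.sum_le_sum hub
        _ = ((L:ℝ)+1) * (A*‖x‖)^2 := by
            rw [Finset.sum_const, Finset.card_range, nsmul_eq_mul]
            push_cast
            ring
    have sumV : ∑ t ∈ Finset.range R, ‖V t‖^2 ≤ (R:ℝ) * (((L:ℝ)+1) * (A*‖y‖)^2) := by
      rw [pV]
      refine mul_le_mul_of_nonneg_left ?_ (by positivity)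
      calc ∑ i ∈ Finset.range (L+1), ‖v i‖^2 ≤ ∑ _i ∈ Finset.range (L+1), (A*‖y‖)^2 :=
            Finset.sum_le_sum hvb
        _ = ((L:ℝ)+1) * (A*‖y‖)^2 := by
            rw [Finset.sum_const, Finset.card_range, nsmul_eq_mul]
            push_cast
            ring
    have GB : ∀ t : ℕ, ‖G t‖ ≤ S/((σ:ℝ)+1) := by
      intro t
      have hβt : Complex.abs (β^t) ≤ 1 := by
        rw [map_pow, hβabs, one_pow]
      have := g_bound L σ c S hS0 hsupp hS (β^t) hβt
      rw [hG]
      simp only [hγdef]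
      simpa [Complex.abs_apply] using this
    have claim2' : ∑ t ∈ Finset.range R, G t * ⟪V t, U t⟫ = (R:ℂ) * ⟪y, P x⟫ := by
      rw [claim2, claim1]
    have step1 : (R:ℝ) * ‖(⟪y, P x⟫ : ℂ)‖ = ‖∑ t ∈ Finset.range R, G t * ⟪V t, U t⟫‖ := by
      rw [claim2', norm_mul]
      congr 1
      simp
    have CS : ∑ t ∈ Finset.range R, ‖V t‖ * ‖U t‖
        ≤ Real.sqrt (∑ t ∈ Finset.range R, ‖V t‖^2)
          * Real.sqrt (∑ t ∈ Finset.range R, ‖U t‖^2) := by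
      have h := Finset.sum_mul_sq_le_sq_mul_sq (Finset.range R)
        (fun t => ‖V t‖) (fun t => ‖U t‖)
      have hnn : (0:ℝ) ≤ ∑ t ∈ Finset.range R, ‖V t‖ * ‖U t‖ := by positivity
      calc ∑ t ∈ Finset.range R, ‖V t‖ * ‖U t‖
          = Real.sqrt ((∑ t ∈ Finset.range R, ‖V t‖ * ‖U t‖)^2) := (Real.sqrt_sq hnn).symm
        _ ≤ Real.sqrt ((∑ t ∈ Finset.range R, ‖V t‖^2) * ∑ t ∈ Finset.range R, ‖U t‖^2) :=
            Real.sqrt_le_sqrt h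
        _ = _ := Real.sqrt_mul (by positivity) _
    have sqU : Real.sqrt (∑ t ∈ Finset.range R, ‖U t‖^2)
        ≤ Real.sqrt ((R:ℝ) * ((L:ℝ)+1)) * (A*‖x‖) := by
      have h := Real.sqrt_le_sqrt sumU
      rw [show (R:ℝ) * (((L:ℝ)+1) * (A*‖x‖)^2) = ((R:ℝ) * ((L:ℝ)+1)) * (A*‖x‖)^2 by ring,
        Real.sqrt_mul (by positivity) ((A*‖x‖)^2), Real.sqrt_sq (by positivity)] at h
      exact h
    have sqV : Real.sqrt (∑ t ∈ Finset.range R, ‖V t‖^2)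
        ≤ Real.sqrt ((R:ℝ) * ((L:ℝ)+1)) * (A*‖y‖) := by
      have h := Real.sqrt_le_sqrt sumV
      rw [show (R:ℝ) * (((L:ℝ)+1) * (A*‖y‖)^2) = ((R:ℝ) * ((L:ℝ)+1)) * (A*‖y‖)^2 by ring,
        Real.sqrt_mul (by positivity) ((A*‖y‖)^2), Real.sqrt_sq (by positivity)] at h
      exact h
    have hSσ : (0:ℝ) ≤ S/((σ:ℝ)+1) := div_nonneg hS0 (by positivity)
    have step2 : ‖∑ t ∈ Finset.range R, G t * ⟪V t, U t⟫‖
        ≤ (S/((σ:ℝ)+1)) * ∑ t ∈ Finset.range R, ‖V t‖ * ‖U t‖ := by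
      refine (norm_sum_le _ _).trans ?_
      rw [Finset.mul_sum]
      refine Finset.sum_le_sum fun t _ => ?_
      rw [norm_mul]
      exact mul_le_mul (GB t) (norm_inner_le_norm _ _) (norm_nonneg _) hSσ
    have hRL : Real.sqrt ((R:ℝ) * ((L:ℝ)+1)) * Real.sqrt ((R:ℝ) * ((L:ℝ)+1))
        = (R:ℝ) * ((L:ℝ)+1) := Real.mul_self_sqrt (by positivity)
    have main : (R:ℝ) * ‖(⟪y, P x⟫ : ℂ)‖
        ≤ (S/((σ:ℝ)+1)) * (((R:ℝ) * ((L:ℝ)+1)) * ((A*‖y‖) * (A*‖x‖))) := by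
      rw [step1]
      refine step2.trans ?_
      refine (mul_le_mul_of_nonneg_left (CS.trans ?_) hSσ)
      calc Real.sqrt (∑ t ∈ Finset.range R, ‖V t‖^2)
            * Real.sqrt (∑ t ∈ Finset.range R, ‖U t‖^2)
          ≤ (Real.sqrt ((R:ℝ) * ((L:ℝ)+1)) * (A*‖y‖))
            * (Real.sqrt ((R:ℝ) * ((L:ℝ)+1)) * (A*‖x‖)) := by
            exact mul_le_mul sqV sqU (Real.sqrt_nonneg _) (by positivity)
        _ = (Real.sqrt ((R:ℝ) * ((L:ℝ)+1)) * Real.sqrt ((R:ℝ) * ((L:ℝ)+1)))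
              * ((A*‖y‖) * (A*‖x‖)) := by ring
        _ = ((R:ℝ) * ((L:ℝ)+1)) * ((A*‖y‖) * (A*‖x‖)) := by rw [hRL]
    have hRpos : (0:ℝ) < (R:ℝ) := by
      exact_mod_cast hR0
    have final : ‖(⟪y, P x⟫ : ℂ)‖
        ≤ (S/((σ:ℝ)+1)) * (((L:ℝ)+1) * ((A*‖y‖) * (A*‖x‖))) := by
      have h2 : (R:ℝ) * ‖(⟪y, P x⟫ : ℂ)‖
          ≤ (R:ℝ) * ((S/((σ:ℝ)+1)) * (((L:ℝ)+1) * ((A*‖y‖) * (A*‖x‖)))) := by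
        refine main.trans_eq ?_
        ring
      exact le_of_mul_le_mul_left h2 hRpos
    calc ‖(⟪y, P x⟫ : ℂ)‖ ≤ (S/((σ:ℝ)+1)) * (((L:ℝ)+1) * ((A*‖y‖) * (A*‖x‖))) := final
      _ = ((((L:ℝ)+1) * (S / ((σ:ℝ)+1))) * A^2) * (‖x‖ * ‖y‖) := by ring
  -- from the bilinear estimate to the operator norm
  have K0 : (0:ℝ) ≤ (((L:ℝ)+1) * (S / ((σ:ℝ)+1))) * A^2 := by
    refine mul_nonneg (mul_nonneg (by positivity) (div_nonneg hS0 (by positivity))) (by positivity)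
  refine ContinuousLinearMap.opNorm_le_bound P K0 fun x => ?_
  by_cases hPx : ‖P x‖ = 0
  · rw [hPx]
    exact mul_nonneg K0 (norm_nonneg x)
  · have h := bilin x (P x)
    simp only [inner_self_eq_norm_sq_to_K, norm_pow, RCLike.norm_ofReal, abs_norm] at h
    have hpos : 0 < ‖P x‖ := lt_of_le_of_ne (norm_nonneg _) (Ne.symm hPx)
    nlinarith [h, hpos]

end KB


lemma dyadicPhi_nonneg (n k : ℕ) : 0 ≤ dyadicPhi n k := by
  unfold dyadicPhi
  split_ifs with h1 h2 h3 h4 h5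
  · norm_num
  · norm_num
  · norm_num
  · have hk : (2:ℝ)^(n-1) ≤ (k:ℝ) := by
      have : (2:ℕ)^(n-1) ≤ k := by omega
      exact_mod_cast this
    apply div_nonneg (by linarith) (by positivity)
  · have hk : (k:ℝ) ≤ (2:ℝ)^(n+1) := by exact_mod_cast h5
    have h2p : (0:ℝ) < 2^n := by positivity
    apply div_nonneg (by linarith) (by positivity)
  · norm_num

lemma dyadicPhi_abs_le_one (n k : ℕ) : dyadicPhi n k ≤ 1 := by
  unfold dyadicPhi
  split_ifs with h1 h2 h3 h4 h5
  · norm_num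
  · norm_num
  · norm_num
  · rw [div_le_one (by positivity)]
    have hk : (k:ℝ) ≤ (2:ℝ)^n := by exact_mod_cast h4
    have : (2:ℝ)^n ≤ 2^(n-1) * 2 := by
      rw [show (2:ℝ)^(n-1) * 2 = 2^(n-1+1) by ring]
      apply pow_le_pow_right₀ (by norm_num)
      omega
    linarith
  · rw [div_le_one (by positivity)]
    have hk : (2:ℝ)^n < (k:ℝ) := by
      have : (2:ℕ)^n < k := by omega
      exact_mod_cast this
    have : (2:ℝ)^(n+1) = 2^n * 2 := by ring
    linarith
  · norm_num

lemma dyadicPhi_zero_high (n k : ℕ) (hk : (if n = 0 then 1 else 2^(n+1)) < k) :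
    dyadicPhi n k = 0 := by
  unfold dyadicPhi
  by_cases hn : n = 0
  · subst hn
    rw [if_pos rfl] at hk
    rw [if_pos rfl, if_neg (by omega)]
  · rw [if_neg hn] at hk
    rw [if_neg hn]
    have h1 : ¬ k ≤ 2^(n-1) := by
      have : 2^(n-1) ≤ 2^(n+1) := Nat.pow_le_pow_right (by norm_num) (by omega)
      omega
    have h2 : ¬ k ≤ 2^n := by
      have : 2^n ≤ 2^(n+1) := Nat.pow_le_pow_right (by norm_num) (by omega)
      omega
    rw [if_neg h1, if_neg h2, if_neg (by omega)]

lemma dyadicPhi_zero_low (n k : ℕ) (hn : n ≠ 0) (hk : k ≤ 2^(n-1)) :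
    dyadicPhi n k = 0 := by
  unfold dyadicPhi
  rw [if_neg hn, if_pos hk]

lemma dyadicPhi_partition (k N : ℕ) (hk : k ≤ N) :
    ∑ n ∈ Finset.range (N+2), dyadicPhi n k = 1 := by
  rcases le_or_gt k 1 with hk1 | hk1
  · rw [Finset.sum_eq_single 0]
    · unfold dyadicPhi
      rw [if_pos rfl, if_pos hk1]
    · intro n hn hn0
      apply dyadicPhi_zero_low n k hn0
      calc k ≤ 1 := hk1
        _ ≤ 2^(n-1) := Nat.one_le_two_pow
    · intro h
      exact absurd (Finset.mem_range.mpr (by omega)) h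
  · obtain ⟨e, he1, he2⟩ : ∃ e, 2^e ≤ k-1 ∧ k-1 < 2^(e+1) :=
      ⟨Nat.log 2 (k-1), Nat.pow_log_le_self 2 (by omega),
        Nat.lt_pow_succ_log_self (by norm_num) (k-1)⟩
    have hlow : 2^e < k := by omega
    have hhigh : k ≤ 2^(e+1) := by omega
    have hee : e < 2^e := Nat.lt_two_pow_self
    have heN : e + 1 ≤ N := by
      have h1 : e + 1 ≤ 2^e := by omega
      have h2 : 2^e < N := by omega
      omega
    have hsub : ({e, e+1} : Finset ℕ) ⊆ Finset.range (N+2) := by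
      intro n hn
      simp only [Finset.mem_insert, Finset.mem_singleton] at hn
      rw [Finset.mem_range]
      omega
    rw [← Finset.sum_subset hsub ?_]
    · rw [Finset.sum_pair (by omega : e ≠ e+1)]
      rcases Nat.eq_zero_or_pos e with he0 | hepos
      · subst he0
        have hk2 : k = 2 := by
          simp at hlow hhigh
          omega
        subst hk2
        unfold dyadicPhi
        norm_num
      · obtain ⟨m, rfl⟩ : ∃ m, e = m + 1 := ⟨e - 1, by omega⟩
        have hm1 : 2^(m+1) < k := hlow
        have hm2 : k ≤ 2^(m+2) := hhigh
        have hmono : (2:ℕ)^m ≤ 2^(m+1) := Nat.pow_le_pow_right (by norm_num) (by omega)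
        unfold dyadicPhi
        rw [if_neg (by omega : ¬ (m+1 = 0)), if_neg (by omega : ¬ (m+2 = 0))]
        simp only [show m+1-1 = m by omega, show m+2-1 = m+1 by omega]
        rw [if_neg (by omega : ¬ k ≤ 2^m), if_neg (by omega : ¬ k ≤ 2^(m+1)),
          if_pos (by omega : k ≤ 2^(m+1+1)), if_neg (by omega : ¬ k ≤ 2^(m+1)),
          if_pos (by omega : k ≤ 2^(m+2))]
        have hc1 : ((2:ℝ)^(m+1+1) : ℝ) = 2 * 2^(m+1) := by ring
        have hpos : (0:ℝ) < 2^(m+1) := by positivity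
        field_simp
        ring
    · intro n hn hn2
      simp only [Finset.mem_insert, Finset.mem_singleton] at hn2
      push_neg at hn2
      obtain ⟨hne, hne1⟩ := hn2
      rcases Nat.eq_zero_or_pos n with hn0 | hnpos
      · subst hn0
        unfold dyadicPhi
        rw [if_pos rfl, if_neg (by omega)]
      · rcases lt_or_gt_of_ne hne with hlt | hgt
        · -- n < e, so n+1 ≤ e, k > 2^e ≥ 2^(n+1)
          apply dyadicPhi_zero_high
          rw [if_neg (by omega)]
          have : (2:ℕ)^(n+1) ≤ 2^e := Nat.pow_le_pow_right (by norm_num) (by omega)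
          omega
        · -- n > e and n ≠ e+1, so n ≥ e+2, k ≤ 2^(e+1) ≤ 2^(n-1)
          apply dyadicPhi_zero_low n k (by omega)
          have : (2:ℕ)^(e+1) ≤ 2^(n-1) := Nat.pow_le_pow_right (by norm_num) (by omega)
          omega

lemma sum_normalize (n N : ℕ) (a : ℕ → ℂ) {W : Type*} [AddCommMonoid W] [Module ℂ W]
    (B : ℕ → W) :
    ∑ k ∈ Finset.range ((if n = 0 then 1 else 2^(n+1)) + 1),
      (if k ≤ N then (dyadicPhi n k : ℂ) * a k else 0) • B k
    = ∑ k ∈ Finset.range (N+1), ((dyadicPhi n k : ℂ) * a k) • B k := by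
  set L := (if n = 0 then 1 else 2^(n+1)) with hL
  have hzero : ∀ k, L < k → (if k ≤ N then (dyadicPhi n k : ℂ) * a k else 0) • B k = 0 := by
    intro k hk
    by_cases hkN : k ≤ N
    · rw [if_pos hkN, dyadicPhi_zero_high n k (by rw [← hL]; exact hk)]
      simp
    · rw [if_neg hkN]
      simp
  have h1 : ∑ k ∈ Finset.range (L+1), (if k ≤ N then (dyadicPhi n k : ℂ) * a k else 0) • B k
      = ∑ k ∈ Finset.range (L+N+2), (if k ≤ N then (dyadicPhi n k : ℂ) * a k else 0) • B k := by
    apply Finset.sum_subset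
    · apply Finset.range_subset_range.mpr
      omega
    · intro k hk hk'
      rw [Finset.mem_range] at hk hk'
      exact hzero k (by omega)
  have h2 : ∑ k ∈ Finset.range (N+1), ((dyadicPhi n k : ℂ) * a k) • B k
      = ∑ k ∈ Finset.range (L+N+2), (if k ≤ N then (dyadicPhi n k : ℂ) * a k else 0) • B k := by
    rw [show ∑ k ∈ Finset.range (N+1), ((dyadicPhi n k : ℂ) * a k) • B k
        = ∑ k ∈ Finset.range (N+1), (if k ≤ N then (dyadicPhi n k : ℂ) * a k else 0) • B k from
      Finset.sum_congr rfl fun k hk => by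
        rw [Finset.mem_range] at hk
        rw [if_pos (by omega)]]
    apply Finset.sum_subset
    · apply Finset.range_subset_range.mpr
      omega
    · intro k hk hk'
      rw [Finset.mem_range] at hk hk'
      rw [if_neg (by omega)]
      simp
  rw [h1, h2]

lemma const_arith (M α : ℝ) (hM : 1 ≤ M) (hα : 0 ≤ α) (S : ℝ) (hS0 : 0 ≤ S) (n : ℕ) :
    ((((if n = 0 then 1 else 2^(n+1) : ℕ):ℝ)+1)
        * (S / (((if n = 0 then 0 else 2^(n-1)+1 : ℕ):ℝ)+1)))
      * (M * (1 + ((if n = 0 then 1 else 2^(n+1) : ℕ):ℝ))^α)^2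
    ≤ 8 * 9^α * M^2 * ((2:ℝ)^(2*α*(n:ℝ)) * S) := by
  have h9 : (0:ℝ) < 9^α := Real.rpow_pos_of_pos (by norm_num) α
  have hM2 : (0:ℝ) ≤ M^2 := by positivity
  rcases Nat.eq_zero_or_pos n with hn | hn
  · subst hn
    simp only [if_pos rfl]
    rw [show (2:ℝ)*α*((0:ℕ):ℝ) = 0 by norm_num, Real.rpow_zero]
    have h4 : ((2:ℝ)^α)^2 = 4^α := by
      rw [sq, ← Real.mul_rpow (by norm_num) (by norm_num)]
      norm_num
    have h49 : (4:ℝ)^α ≤ 9^α := Real.rpow_le_rpow (by norm_num) (by norm_num) hα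
    push_cast
    have key : S * M^2 * (4:ℝ)^α ≤ S * M^2 * 9^α :=
      mul_le_mul_of_nonneg_left h49 (mul_nonneg hS0 hM2)
    have h9nn : (0:ℝ) ≤ S * M^2 * 9^α := by positivity
    calc ((1:ℝ)+1) * (S/(0+1)) * (M * ((1:ℝ)+1)^α)^2
        = 2 * (S * M^2 * ((2:ℝ)^α)^2) := by norm_num; ring
      _ = 2 * (S * M^2 * 4^α) := by rw [h4]
      _ ≤ 8 * (S * M^2 * 9^α) := by nlinarith
      _ = 8 * 9^α * M^2 * (1 * S) := by ring
  · obtain ⟨m, rfl⟩ : ∃ m, n = m + 1 := ⟨n - 1, by omega⟩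
    simp only [if_neg (by omega : ¬ (m+1 = 0)), show m+1-1 = m by omega]
    have hc1 : (((2:ℕ)^(m+1+1) : ℕ):ℝ) = (2:ℝ)^(m+2) := by push_cast; ring
    have hc2 : (((2:ℕ)^m+1 : ℕ):ℝ) = (2:ℝ)^m + 1 := by push_cast; ring
    rw [hc1, hc2]
    have hp : (0:ℝ) < (2:ℝ)^m := by positivity
    have hp1 : (1:ℝ) ≤ (2:ℝ)^m := one_le_pow₀ (by norm_num)
    -- step i : (2^(m+2)+1)/(2^m+2) ≤ 8
    have hi : ((2:ℝ)^(m+2)+1)/((2:ℝ)^m+1+1) ≤ 8 := by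
      rw [div_le_iff₀ (by positivity)]
      have : (2:ℝ)^(m+2) = 4 * 2^m := by ring
      nlinarith
    -- step ii : ((1+2^(m+2))^α)^2 ≤ 9^α * 2^(2α(m+1))
    have hii : ((1 + (2:ℝ)^(m+2))^α)^2 ≤ 9^α * (2:ℝ)^(2*α*((m+1:ℕ):ℝ)) := by
      have h1 : (1 + (2:ℝ)^(m+2)) ≤ 3 * 2^(m+1) := by
        have : (2:ℝ)^(m+2) = 4 * 2^m := by ring
        have h3 : (3:ℝ) * 2^(m+1) = 6 * 2^m := by ring
        nlinarith
      have h2 : ((1 + (2:ℝ)^(m+2))^α) ≤ (3 * 2^(m+1))^α :=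
        Real.rpow_le_rpow (by positivity) h1 hα
      have h3 : ((1 + (2:ℝ)^(m+2))^α)^2 ≤ ((3 * 2^(m+1))^α)^2 := by
        apply pow_le_pow_left₀ (Real.rpow_nonneg (by positivity) α) h2
      refine h3.trans_eq ?_
      rw [Real.mul_rpow (by norm_num) (by positivity)]
      rw [mul_pow]
      congr 1
      · rw [sq, ← Real.mul_rpow (by norm_num) (by norm_num)]
        norm_num
      · rw [sq, ← Real.mul_rpow (by positivity) (by positivity)]
        rw [show ((2:ℝ)^(m+1)) * ((2:ℝ)^(m+1)) = (2:ℝ)^(2*(m+1)) by rw [← pow_add]; ring_nf]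
        rw [← Real.rpow_natCast (2:ℝ) (2*(m+1)), ← Real.rpow_mul (by norm_num)]
        congr 1
        push_cast
        ring
    -- combine
    have hSM : (0:ℝ) ≤ S * M^2 := mul_nonneg hS0 hM2
    have hLHS : (((2:ℝ)^(m+2))+1) * (S / (((2:ℝ)^m+1)+1)) * (M * (1 + (2:ℝ)^(m+2))^α)^2
        = (S * M^2) * ((((2:ℝ)^(m+2)+1)/((2:ℝ)^m+1+1)) * ((1 + (2:ℝ)^(m+2))^α)^2) := by
      ring
    rw [hLHS]
    have hbr : (((2:ℝ)^(m+2)+1)/((2:ℝ)^m+1+1)) * ((1 + (2:ℝ)^(m+2))^α)^2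
        ≤ 8 * (9^α * (2:ℝ)^(2*α*((m+1:ℕ):ℝ))) := by
      have hnn1 : (0:ℝ) ≤ ((1 + (2:ℝ)^(m+2))^α)^2 := sq_nonneg _
      have hnn2 : (0:ℝ) ≤ ((2:ℝ)^(m+2)+1)/((2:ℝ)^m+1+1) := by positivity
      calc (((2:ℝ)^(m+2)+1)/((2:ℝ)^m+1+1)) * ((1 + (2:ℝ)^(m+2))^α)^2
          ≤ 8 * ((1 + (2:ℝ)^(m+2))^α)^2 := mul_le_mul_of_nonneg_right hi hnn1
        _ ≤ 8 * (9^α * (2:ℝ)^(2*α*((m+1:ℕ):ℝ))) := by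
            apply mul_le_mul_of_nonneg_left hii (by norm_num)
    calc (S * M^2) * ((((2:ℝ)^(m+2)+1)/((2:ℝ)^m+1+1)) * ((1 + (2:ℝ)^(m+2))^α)^2)
        ≤ (S * M^2) * (8 * (9^α * (2:ℝ)^(2*α*((m+1:ℕ):ℝ)))) :=
          mul_le_mul_of_nonneg_left hbr hSM
      _ = 8 * 9^α * M^2 * ((2:ℝ)^(2*α*((m+1:ℕ):ℝ)) * S) := by ring

/-- **Peller's theorem (discrete case, 1982).**  There is an absolute
constant `c ≥ 0` such that for every Hilbert space `H` and every
`T ∈ L(H)` with `‖Tⁿ‖ ≤ M(1+n)^α` (`M ≥ 1`, `α ≥ 0`) one has, for every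
polynomial `f(z) = Σ_{k=0}^{N} a_k z^k`,
`‖f(T)‖ ≤ c · 9^α · M² · ‖f‖_{B^{2α}_{∞,1}(𝔻)}`. -/
theorem peller_discrete :
    ∃ c : ℝ, 0 ≤ c ∧
      ∀ (H : Type*) [NormedAddCommGroup H] [InnerProductSpace ℂ H] [CompleteSpace H],
      ∀ T : H →L[ℂ] H,
      ∀ M α : ℝ, 1 ≤ M → 0 ≤ α →
        (∀ n : ℕ, ‖T ^ n‖ ≤ M * (1 + (n : ℝ)) ^ α) →
      ∀ (N : ℕ) (a : ℕ → ℂ),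
        ‖∑ k ∈ Finset.range (N + 1), a k • T ^ k‖ ≤
          c * 9 ^ α * M ^ 2 *
            ∑' n : ℕ, (2 : ℝ) ^ (2 * α * (n : ℝ)) *
              sSup {r : ℝ | ∃ z : ℂ, ‖z‖ < 1 ∧
                r = ‖(∑ k ∈ Finset.range (N + 1),
                      (dyadicPhi n k : ℂ) * a k * z ^ k)‖} := by
  classical
  refine ⟨8, by norm_num, ?_⟩
  intro H _ _ _ T M α hM hα hT N a
  set F : ℕ → ℂ → ℂ := fun n z => ∑ k ∈ Finset.range (N + 1),
      (dyadicPhi n k : ℂ) * a k * z ^ k with hF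
  set Sset : ℕ → Set ℝ := fun n => {r : ℝ | ∃ z : ℂ, Complex.abs z < 1 ∧
      r = Complex.abs (F n z)} with hSset
  set S : ℕ → ℝ := fun n => sSup (Sset n) with hSdef
  -- basic facts about the sup
  have hbdd : ∀ n, BddAbove (Sset n) := by
    intro n
    refine ⟨∑ k ∈ Finset.range (N+1), Complex.abs ((dyadicPhi n k : ℂ) * a k), ?_⟩
    rintro r ⟨z, hz, rfl⟩
    rw [hF]
    simp only []
    refine (Complex.abs.sum_le _ _).trans (Finset.sum_le_sum fun k _ => ?_)
    rw [map_mul]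
    calc Complex.abs ((dyadicPhi n k : ℂ) * a k) * Complex.abs (z ^ k)
        ≤ Complex.abs ((dyadicPhi n k : ℂ) * a k) * 1 := by
          refine mul_le_mul_of_nonneg_left ?_ (Complex.abs.nonneg _)
          rw [map_pow]
          exact pow_le_one₀ (Complex.abs.nonneg z) hz.le
      _ = _ := mul_one _
  have hSle : ∀ n, ∀ z : ℂ, Complex.abs z < 1 → Complex.abs (F n z) ≤ S n := by
    intro n z hz
    exact le_csSup (hbdd n) ⟨z, hz, rfl⟩
  have hS0 : ∀ n, 0 ≤ S n := by
    intro n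
    exact le_trans (Complex.abs.nonneg (F n 0)) (hSle n 0 (by norm_num))
  -- coefficients
  set cf : ℕ → ℕ → ℂ := fun n k => if k ≤ N then (dyadicPhi n k : ℂ) * a k else 0 with hcf
  set Lf : ℕ → ℕ := fun n => if n = 0 then 1 else 2^(n+1) with hLf
  set σf : ℕ → ℕ := fun n => if n = 0 then 0 else 2^(n-1)+1 with hσf
  have hsupp : ∀ n k, k < σf n → cf n k = 0 := by
    intro n k hk
    rw [hσf] at hk
    simp only [] at hk
    rw [hcf]
    simp only []
    by_cases hn : n = 0
    · rw [hn] at hk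
      simp at hk
    · rw [if_neg hn] at hk
      by_cases hkN : k ≤ N
      · rw [if_pos hkN, dyadicPhi_zero_low n k hn (by omega)]
        simp
      · rw [if_neg hkN]
  have hsupp2 : ∀ n k, Lf n < k → cf n k = 0 := by
    intro n k hk
    rw [hLf] at hk
    simp only [] at hk
    rw [hcf]
    simp only []
    by_cases hkN : k ≤ N
    · rw [if_pos hkN, dyadicPhi_zero_high n k hk]
      simp
    · rw [if_neg hkN]
  -- scalar normalization
  have hscalar : ∀ n (z : ℂ),
      ∑ k ∈ Finset.range (Lf n + 1), cf n k * z ^ k = F n z := by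
    intro n z
    have := sum_normalize n N a (fun k => z ^ k)
    rw [hF, hLf, hcf]
    simp only []
    simpa [smul_eq_mul, mul_assoc] using this
  -- the key estimate, per block
  have hkey : ∀ n : ℕ, ‖∑ k ∈ Finset.range (Lf n + 1), cf n k • T ^ k‖ ≤
      8 * 9^α * M^2 * ((2:ℝ)^(2*α*(n:ℝ)) * S n) := by
    intro n
    have h1 := key_bound T M α hM hα hT (σf n) (Lf n) (cf n)
      (hsupp n) (hsupp2 n) (S n)
      (fun z hz => by rw [hscalar n z]; exact hSle n z hz)
    refine h1.trans ?_
    have h2 := const_arith M α hM hα (S n) (hS0 n) n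
    rw [hLf, hσf]
    simp only []
    exact h2
  -- operator normalization and partition of unity
  have hop : ∑ n ∈ Finset.range (N+2), ∑ k ∈ Finset.range (Lf n + 1), cf n k • T ^ k
      = ∑ k ∈ Finset.range (N + 1), a k • T ^ k := by
    have h1 : ∀ n, ∑ k ∈ Finset.range (Lf n + 1), cf n k • T ^ k
        = ∑ k ∈ Finset.range (N+1), ((dyadicPhi n k : ℂ) * a k) • T ^ k := by
      intro n
      have := sum_normalize n N a (fun k => T ^ k)
      rw [hLf, hcf]
      simp only []
      exact this
    rw [Finset.sum_congr rfl (fun n _ => h1 n), Finset.sum_comm]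
    refine Finset.sum_congr rfl fun k hk => ?_
    rw [Finset.mem_range] at hk
    have hpart : (∑ n ∈ Finset.range (N+2), (dyadicPhi n k : ℂ)) = 1 := by
      have hp := dyadicPhi_partition k N (by omega)
      calc ∑ n ∈ Finset.range (N+2), ((dyadicPhi n k : ℝ) : ℂ)
          = (((∑ n ∈ Finset.range (N+2), dyadicPhi n k : ℝ)) : ℂ) := by
            rw [Complex.ofReal_sum]
        _ = 1 := by rw [hp]; norm_num
    calc ∑ n ∈ Finset.range (N+2), ((dyadicPhi n k : ℂ) * a k) • T ^ k
        = (∑ n ∈ Finset.range (N+2), (dyadicPhi n k : ℂ) * a k) • T ^ k := by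
          rw [Finset.sum_smul]
      _ = ((∑ n ∈ Finset.range (N+2), (dyadicPhi n k : ℂ)) * a k) • T ^ k := by
          rw [Finset.sum_mul]
      _ = a k • T ^ k := by rw [hpart, one_mul]
  -- vanishing of the tail of the series
  have htail : ∀ n : ℕ, n ∉ Finset.range (N+2) →
      (2 : ℝ) ^ (2 * α * (n : ℝ)) * S n = 0 := by
    intro n hn
    rw [Finset.mem_range] at hn
    push_neg at hn
    have hFz : ∀ z : ℂ, F n z = 0 := by
      intro z
      rw [hF]
      simp only []
      refine Finset.sum_eq_zero fun k hk => ?_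
      rw [Finset.mem_range] at hk
      have hphi : dyadicPhi n k = 0 := by
        apply dyadicPhi_zero_low n k (by omega)
        have h1 : k < 2^(N+1) := by
          calc k ≤ N := by omega
            _ < 2^N := Nat.lt_two_pow_self
            _ ≤ 2^(N+1) := Nat.pow_le_pow_right (by norm_num) (by omega)
        have h2 : (2:ℕ)^(N+1) ≤ 2^(n-1) := Nat.pow_le_pow_right (by norm_num) (by omega)
        omega
      rw [hphi]
      simp
    have hset : Sset n = {0} := by
      rw [hSset]
      ext r
      simp only [Set.mem_setOf_eq, Set.mem_singleton_iff]
      constructor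
      · rintro ⟨z, hz, rfl⟩
        rw [hFz z]
        simp
      · rintro rfl
        exact ⟨0, by norm_num, by rw [hFz 0]; simp⟩
    rw [hSdef]
    simp only []
    rw [hset, csSup_singleton, mul_zero]
  have htsum : (∑' n : ℕ, (2 : ℝ) ^ (2 * α * (n : ℝ)) * S n)
      = ∑ n ∈ Finset.range (N+2), (2 : ℝ) ^ (2 * α * (n : ℝ)) * S n :=
    tsum_eq_sum htail
  -- final chain
  calc ‖∑ k ∈ Finset.range (N + 1), a k • T ^ k‖
      = ‖∑ n ∈ Finset.range (N+2), ∑ k ∈ Finset.range (Lf n + 1), cf n k • T ^ k‖ := by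
        rw [hop]
    _ ≤ ∑ n ∈ Finset.range (N+2), ‖∑ k ∈ Finset.range (Lf n + 1), cf n k • T ^ k‖ :=
        norm_sum_le _ _
    _ ≤ ∑ n ∈ Finset.range (N+2), 8 * 9^α * M^2 * ((2:ℝ)^(2*α*(n:ℝ)) * S n) :=
        Finset.sum_le_sum fun n _ => hkey n
    _ = 8 * 9^α * M^2 * ∑ n ∈ Finset.range (N+2), (2:ℝ)^(2*α*(n:ℝ)) * S n := by
        rw [Finset.mul_sum]
    _ = 8 * 9 ^ α * M ^ 2 * ∑' n : ℕ, (2 : ℝ) ^ (2 * α * (n : ℝ)) * S n := by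
        rw [htsum]
end

section
/- Let α > 0 and define the coefficient sequence a : ℤ₊ → ℝ by a_k = 2^{-2αn} if k = 2^n for some integer n ≥ 0, and a_k = 0 otherwise. Then Σ_{k=0}^{∞} |a_k| (1+k)^α < ∞, but Σ_{n=0}^{∞} 2^{2αn} sup_{|z|<1} |Σ_k φ_n(k) a_k z^k| = ∞. Hence the function f(z) = Σ_{n=0}^{∞} 2^{-2αn} z^{2^n} belongs to A_α(𝔻) but not to B^{2α}_{∞,1}(𝔻), so A_α(𝔻) is not contained in B^{2α}_{∞,1}(𝔻). -/
open MeasureTheory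

/-- The coefficient sequence `a_k = 2^{-2αn}` if `k = 2^n` (some `n ≥ 0`)
and `a_k = 0` otherwise. -/
noncomputable def lacunarySeq (α : ℝ) (k : ℕ) : ℝ :=
  if 2 ^ Nat.log 2 k = k then (2 : ℝ) ^ (-(2 * α) * (Nat.log 2 k : ℝ)) else 0

lemma lacunary_pow (α : ℝ) (n : ℕ) :
    lacunarySeq α (2 ^ n) = (2 : ℝ) ^ (-(2 * α) * (n : ℝ)) := by
  simp [lacunarySeq, Nat.log_pow one_lt_two]

lemma phi_self (n : ℕ) (hn : n ≠ 0) : dyadicPhi n (2 ^ n) = 1 := by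
  have h1 : ¬ (2 ^ n ≤ 2 ^ (n - 1)) := by
    have := Nat.pow_lt_pow_right one_lt_two (show n - 1 < n by omega)
    omega
  have hnn : n = (n - 1) + 1 := by omega
  rw [dyadicPhi, if_neg hn, if_neg h1, if_pos le_rfl]
  have h2 : ((2 : ℝ) ^ (n-1)) ≠ 0 := by positivity
  have : ((2 ^ n : ℕ) : ℝ) = 2 ^ ((n-1)+1) := by rw [← hnn]; push_cast; ring
  rw [this, pow_succ]
  field_simp
  ring

lemma phi_pow_ne (n m : ℕ) (hn : n ≠ 0) (hm : m ≠ n) : dyadicPhi n (2 ^ m) = 0 := by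
  rw [dyadicPhi, if_neg hn]
  rcases lt_or_gt_of_ne hm with h | h
  · have : 2 ^ m ≤ 2 ^ (n - 1) := Nat.pow_le_pow_right (by norm_num) (by omega)
    rw [if_pos this]
  · have h1 : ¬ (2 ^ m ≤ 2 ^ (n - 1)) := by
      have := Nat.pow_lt_pow_right one_lt_two (show n - 1 < m by omega)
      omega
    have h2 : ¬ (2 ^ m ≤ 2 ^ n) := by
      have := Nat.pow_lt_pow_right one_lt_two (show n < m by omega)
      omega
    rw [if_neg h1, if_neg h2]
    by_cases h3 : 2 ^ m ≤ 2 ^ (n + 1)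
    · have hmn : m = n + 1 := by
        have := Nat.pow_le_pow_right (show 1 ≤ 2 by norm_num) (show n + 1 ≤ m by omega)
        have hle : m ≤ n + 1 := by
          by_contra hc
          have := Nat.pow_lt_pow_right one_lt_two (show n + 1 < m by omega)
          omega
        omega
      rw [if_pos h3, hmn]
      push_cast
      ring_nf
    · rw [if_neg h3]

lemma tsum_eq_lacunary (α : ℝ) (n : ℕ) (hn : n ≠ 0) (z : ℂ) :
    (∑' k : ℕ, (dyadicPhi n k : ℂ) * (lacunarySeq α k : ℂ) * z ^ k)
      = ((2 : ℝ) ^ (-(2 * α) * (n : ℝ)) : ℝ) * z ^ (2 ^ n) := by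
  rw [tsum_eq_single (2 ^ n)]
  · rw [phi_self n hn, lacunary_pow]; push_cast; ring
  · intro k hk
    by_cases h2 : 2 ^ Nat.log 2 k = k
    · have hm : Nat.log 2 k ≠ n := fun h => hk (by rw [← h2, h])
      rw [← h2, phi_pow_ne n _ hn hm]
      simp
    · have : lacunarySeq α k = 0 := by rw [lacunarySeq, if_neg h2]
      rw [this]; simp


/-- **`A_α(𝔻)` is not contained in `B^{2α}_{∞,1}(𝔻)` (Remark 5.2).**
For `α > 0` the lacunary series `f(z) = Σ_n 2^{-2αn} z^{2^n}` has
`Σ_k |a_k|(1+k)^α < ∞` but infinite Besov norm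
`Σ_n 2^{2αn} sup_{|z|<1} |Σ_k φ_n(k) a_k z^k| = ∞`. -/
theorem weighted_wiener_not_in_besov (α : ℝ) (hα : 0 < α) :
    Summable (fun k : ℕ => |lacunarySeq α k| * (1 + (k : ℝ)) ^ α) ∧
    ¬ Summable (fun n : ℕ => (2 : ℝ) ^ (2 * α * (n : ℝ)) *
        sSup {r : ℝ | ∃ z : ℂ, ‖z‖ < 1 ∧
          r = ‖∑' k : ℕ,
                (dyadicPhi n k : ℂ) * (lacunarySeq α k : ℂ) * z ^ k‖}) := by
  constructor
  · -- Part 1: summability of the weighted Wiener norm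
    set f : ℕ → ℝ := fun k => |lacunarySeq α k| * (1 + (k : ℝ)) ^ α with hf
    have hi : Function.Injective (fun n : ℕ => 2 ^ n) :=
      fun a b h => Nat.pow_right_injective le_rfl h
    have hzero : ∀ k ∉ Set.range (fun n : ℕ => 2 ^ n), f k = 0 := by
      intro k hk
      have h2 : 2 ^ Nat.log 2 k ≠ k := by
        intro h; exact hk ⟨Nat.log 2 k, h⟩
      simp [hf, lacunarySeq, h2]
    rw [← hi.summable_iff hzero]
    have hbound : ∀ n : ℕ, f (2 ^ n) ≤ (2 : ℝ) ^ α * ((2 : ℝ) ^ (-α)) ^ n := by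
      intro n
      have hpos : (0 : ℝ) < (2 : ℝ) ^ (-(2 * α) * (n : ℝ)) := Real.rpow_pos_of_pos two_pos _
      rw [hf]
      simp only [lacunary_pow, abs_of_pos hpos]
      have hb : (1 + ((2 ^ n : ℕ) : ℝ)) ≤ (2 : ℝ) ^ ((n : ℝ) + 1) := by
        have : ((n : ℝ) + 1) = ((n + 1 : ℕ) : ℝ) := by push_cast; ring
        rw [this, Real.rpow_natCast]
        push_cast
        rw [pow_succ]
        nlinarith [one_le_pow₀ (show (1:ℝ) ≤ 2 by norm_num) (n := n)]
      have hmono : (1 + ((2 ^ n : ℕ) : ℝ)) ^ α ≤ ((2 : ℝ) ^ ((n : ℝ) + 1)) ^ α :=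
        Real.rpow_le_rpow (by positivity) hb hα.le
      calc (2 : ℝ) ^ (-(2 * α) * (n : ℝ)) * (1 + ((2 ^ n : ℕ) : ℝ)) ^ α
          ≤ (2 : ℝ) ^ (-(2 * α) * (n : ℝ)) * ((2 : ℝ) ^ ((n : ℝ) + 1)) ^ α :=
            mul_le_mul_of_nonneg_left hmono hpos.le
        _ = (2 : ℝ) ^ α * ((2 : ℝ) ^ (-α)) ^ n := by
            rw [← Real.rpow_natCast ((2:ℝ)^(-α)) n, ← Real.rpow_mul (by norm_num : (0:ℝ) ≤ 2),
              ← Real.rpow_mul (by norm_num : (0:ℝ) ≤ 2),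
              ← Real.rpow_add two_pos, ← Real.rpow_add two_pos]
            ring_nf
    have hgeo : Summable (fun n : ℕ => (2 : ℝ) ^ α * ((2 : ℝ) ^ (-α)) ^ n) := by
      apply Summable.mul_left
      apply summable_geometric_of_lt_one (Real.rpow_nonneg (by norm_num) _)
      exact Real.rpow_lt_one_of_one_lt_of_neg one_lt_two (by linarith)
    exact Summable.of_nonneg_of_le
      (fun n => mul_nonneg (abs_nonneg _) (Real.rpow_nonneg (by positivity) _)) hbound hgeo
  · -- Part 2: Besov norm diverges
    intro hs
    have h0 := hs.tendsto_atTop_zero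
    have key : ∀ n : ℕ, n ≠ 0 → (1 : ℝ) / 2 ≤ (2 : ℝ) ^ (2 * α * (n : ℝ)) *
        sSup {r : ℝ | ∃ z : ℂ, ‖z‖ < 1 ∧
          r = ‖∑' k : ℕ,
                (dyadicPhi n k : ℂ) * (lacunarySeq α k : ℂ) * z ^ k‖} := by
      intro n hn
      set c : ℝ := (2 : ℝ) ^ (-(2 * α) * (n : ℝ)) with hc
      have hcpos : 0 < c := Real.rpow_pos_of_pos two_pos _
      set S := {r : ℝ | ∃ z : ℂ, ‖z‖ < 1 ∧
          r = ‖∑' k : ℕ,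
                (dyadicPhi n k : ℂ) * (lacunarySeq α k : ℂ) * z ^ k‖} with hS
      have hbdd : BddAbove S := by
        refine ⟨c, ?_⟩
        rintro r ⟨z, hz, rfl⟩
        rw [tsum_eq_lacunary α n hn z, norm_mul, Complex.norm_real, Real.norm_eq_abs, norm_pow,
          abs_of_pos hcpos]
        calc c * ‖z‖ ^ 2 ^ n ≤ c * 1 := by
              apply mul_le_mul_of_nonneg_left _ hcpos.le
              exact pow_le_one₀ (norm_nonneg z) hz.le
          _ = c := mul_one c
      -- witness element c/2
      set t : ℝ := (2 : ℝ) ^ (-(((2 : ℝ) ^ n)⁻¹)) with ht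
      have htpos : 0 < t := Real.rpow_pos_of_pos two_pos _
      have htlt : t < 1 := Real.rpow_lt_one_of_one_lt_of_neg one_lt_two (neg_lt_zero.mpr (by positivity))
      have htpow : t ^ (2 ^ n : ℕ) = 1 / 2 := by
        rw [ht, ← Real.rpow_natCast ((2:ℝ) ^ (-(((2 : ℝ) ^ n)⁻¹))) (2 ^ n),
          ← Real.rpow_mul (by norm_num : (0:ℝ) ≤ 2)]
        have : (-(((2 : ℝ) ^ n)⁻¹)) * ((2 ^ n : ℕ) : ℝ) = -1 := by
          push_cast
          field_simp
        rw [this, Real.rpow_neg_one]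
        norm_num
      have hmem : c * (1 / 2) ∈ S := by
        refine ⟨(t : ℂ), ?_, ?_⟩
        · rwa [Complex.norm_real, Real.norm_eq_abs, abs_of_pos htpos]
        · rw [tsum_eq_lacunary α n hn, norm_mul, Complex.norm_real, Real.norm_eq_abs, abs_of_pos hcpos,
            ← Complex.ofReal_pow, Complex.norm_real, Real.norm_eq_abs, abs_of_pos (pow_pos htpos _), htpow]
      have hsup : c * (1 / 2) ≤ sSup S := le_csSup hbdd hmem
      have hprod : (2 : ℝ) ^ (2 * α * (n : ℝ)) * c = 1 := by
        rw [hc, ← Real.rpow_add two_pos]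
        norm_num
      calc (1 : ℝ) / 2 = (2 : ℝ) ^ (2 * α * (n : ℝ)) * (c * (1 / 2)) := by
            rw [← mul_assoc, hprod, one_mul]
        _ ≤ (2 : ℝ) ^ (2 * α * (n : ℝ)) * sSup S :=
            mul_le_mul_of_nonneg_left hsup (Real.rpow_pos_of_pos two_pos _).le
    have hev : ∀ᶠ n : ℕ in Filter.atTop, (1 : ℝ) / 2 ≤ (2 : ℝ) ^ (2 * α * (n : ℝ)) *
        sSup {r : ℝ | ∃ z : ℂ, ‖z‖ < 1 ∧
          r = ‖∑' k : ℕ,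
                (dyadicPhi n k : ℂ) * (lacunarySeq α k : ℂ) * z ^ k‖} := by
      filter_upwards [Filter.eventually_gt_atTop 0] with n hn
      exact key n hn.ne'
    have := ge_of_tendsto h0 hev
    linarith
end
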